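/- If z is a complex number with 0 < Re(z) < 1 and ζ(z) = 0, then ∑_{n=1}^∞ (-1)^(n-1)/n^(conj(z)) = ∑_{n=1}^∞ (-1)^(n-1)/n^(1-z). -/

import Mathlib

open Filter Finset

open Complex Topology

noncomputable section EtaAux

private def aterm' (s : ℂ) (n : ℕ) : ℂ := (-1 : ℂ) ^ n / ((n : ℂ) + 1) ^ s

private def pterm' (s : ℂ) (k : ℕ) : ℂ := aterm' s (2 * k) + aterm' s (2 * k + 1)

private def EtaF (s : ℂ) : ℂ := ∑' k, pterm' s k

private lemma aterm'_norm (s : ℂ) (n : ℕ) : ‖aterm' s n‖ = ((n : ℝ) + 1) ^ (-s.re) := by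
  have h1 : ((n : ℂ) + 1) = (((n : ℝ) + 1 : ℝ) : ℂ) := by push_cast; ring
  have h2 : (0 : ℝ) < (n : ℝ) + 1 := by positivity
  rw [aterm', norm_div, norm_pow, norm_neg, norm_one, one_pow, h1,
    Complex.norm_cpow_eq_rpow_re_of_pos h2, Real.rpow_neg h2.le, one_div]

private lemma pterm'_eq (s : ℂ) (k : ℕ) :
    pterm' s k = ((2 * k + 1 : ℝ) : ℂ) ^ (-s) - ((2 * k + 2 : ℝ) : ℂ) ^ (-s) := by
  have h1 : ((2 * k : ℂ) + 1) = (((2 * k + 1 : ℝ)) : ℂ) := by push_cast; ring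
  have h2 : (((2 * k + 1 : ℕ) : ℂ) + 1) = (((2 * k + 2 : ℝ)) : ℂ) := by push_cast; ring
  have e1 : (0:ℝ) < 2 * k + 1 := by positivity
  have e2 : (0:ℝ) < 2 * k + 2 := by positivity
  have hsgn1 : ((-1 : ℂ)) ^ (2 * k) = 1 := by
    rw [pow_mul]; norm_num
  have hsgn2 : ((-1 : ℂ)) ^ (2 * k + 1) = -1 := by
    rw [pow_succ, hsgn1]; ring
  rw [pterm', aterm', aterm', hsgn1, hsgn2, ← h2]
  push_cast
  rw [Complex.cpow_neg, Complex.cpow_neg, one_div]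
  ring

end EtaAux

section EtaAux2
open Complex

private lemma pterm'_bound {s : ℂ} (hs : 0 < s.re) (k : ℕ) :
    ‖pterm' s k‖ ≤ ‖s‖ * ((2 * k + 1 : ℝ)) ^ (-s.re - 1) := by
  have hs0 : s ≠ 0 := fun h => by simp [h] at hs
  set a : ℝ := 2 * k + 1 with ha
  set b : ℝ := 2 * k + 2 with hb
  have ha0 : (0:ℝ) < a := by positivity
  have hab : a ≤ b := by simp [ha, hb]
  set g : ℝ → ℂ := fun y => (y : ℂ) ^ (-s) / (-s) with hg
  have hderiv : ∀ x ∈ Set.Icc a b, HasDerivWithinAt g ((x : ℂ) ^ (-s - 1)) (Set.Icc a b) x := by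
    intro x hx
    have hx0 : x ≠ 0 := by have h := hx.1; nlinarith [ha0]
    have hr : (-s - 1 : ℂ) ≠ -1 := by
      intro h
      apply hs0
      have : (-s : ℂ) = 0 := by linear_combination h
      simpa [neg_eq_zero] using this
    have := hasDerivAt_ofReal_cpow_const' hx0 hr
    have h2 : (-s - 1 + 1 : ℂ) = -s := by ring
    rw [h2] at this
    exact this.hasDerivWithinAt
  have hbound : ∀ x ∈ Set.Icc a b, ‖(x : ℂ) ^ (-s - 1)‖ ≤ a ^ (-s.re - 1) := by
    intro x hx
    have hx0 : (0:ℝ) < x := lt_of_lt_of_le ha0 hx.1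
    rw [Complex.norm_cpow_eq_rpow_re_of_pos hx0]
    have : (-s - 1 : ℂ).re = -s.re - 1 := by simp
    rw [this]
    exact Real.rpow_le_rpow_of_nonpos ha0 hx.1 (by linarith)
  have key := Convex.norm_image_sub_le_of_norm_hasDerivWithin_le hderiv hbound
    (convex_Icc a b) (Set.left_mem_Icc.2 hab) (Set.right_mem_Icc.2 hab)
  have hgb : (b:ℂ)^(-s) - (a:ℂ)^(-s) = (-s) * (g b - g a) := by
    rw [hg]
    have : (-s : ℂ) ≠ 0 := neg_ne_zero.2 hs0
    field_simp
    ring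
  have hnorm : ‖pterm' s k‖ = ‖s‖ * ‖g b - g a‖ := by
    rw [pterm'_eq, ← ha, ← hb]
    have : (a:ℂ)^(-s) - (b:ℂ)^(-s) = -((-s) * (g b - g a)) := by rw [← hgb]; ring
    rw [this, norm_neg, norm_mul, norm_neg]
  rw [hnorm]
  have hba : ‖b - a‖ = 1 := by simp [ha, hb]; norm_num
  rw [hba, mul_one] at key
  exact mul_le_mul_of_nonneg_left key (norm_nonneg s)

private lemma bound_summable {σ : ℝ} (hσ : 0 < σ) :
    Summable (fun k : ℕ => ((2 * k + 1 : ℝ)) ^ (-σ - 1)) := by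
  have h1 : Summable (fun k : ℕ => ((k : ℝ) + 1) ^ (-σ - 1)) := by
    have := (Real.summable_nat_rpow (p := -σ - 1)).2 (by linarith)
    have h2 := (summable_nat_add_iff (f := fun n : ℕ => (n : ℝ) ^ (-σ - 1)) 1).2 this
    refine h2.congr fun k => ?_
    push_cast
    ring_nf
  refine h1.of_nonneg_of_le (fun k => Real.rpow_nonneg (by positivity) _) fun k => ?_
  refine Real.rpow_le_rpow_of_nonpos (by positivity) (by linarith [Nat.cast_nonneg (α := ℝ) k]) (by linarith)

private lemma summable_pterm' {s : ℂ} (hs : 0 < s.re) : Summable (pterm' s) :=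
  Summable.of_norm_bounded ((bound_summable hs).mul_left ‖s‖) (pterm'_bound hs)

end EtaAux2

section EtaAux3
open Complex

private lemma sum_range_two_mul (f : ℕ → ℂ) (N : ℕ) :
    ∑ n ∈ range (2 * N), f n = ∑ k ∈ range N, (f (2 * k) + f (2 * k + 1)) := by
  induction N with
  | zero => simp
  | succ N ih =>
    have h : 2 * (N + 1) = 2 * N + 1 + 1 := by ring
    rw [h, Finset.sum_range_succ, Finset.sum_range_succ, ih, Finset.sum_range_succ]
    ring

private lemma aterm'_tendsto {s : ℂ} (hs : 0 < s.re) :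
    Tendsto (fun n : ℕ => aterm' s n) atTop (𝓝 0) := by
  apply squeeze_zero_norm (fun n => le_of_eq (aterm'_norm s n))
  have h1 : Tendsto (fun x : ℝ => x ^ (-s.re)) atTop (𝓝 0) := tendsto_rpow_neg_atTop hs
  have h2 : Tendsto (fun n : ℕ => (n : ℝ) + 1) atTop atTop :=
    tendsto_atTop_add_const_right _ _ tendsto_natCast_atTop_atTop
  exact h1.comp h2

private lemma tendsto_etaF {s : ℂ} (hs : 0 < s.re) :
    Tendsto (fun N : ℕ => ∑ n ∈ range N, aterm' s n) atTop (𝓝 (EtaF s)) := by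
  have heven : Tendsto (fun N : ℕ => ∑ n ∈ range (2 * N), aterm' s n) atTop (𝓝 (EtaF s)) := by
    refine ((summable_pterm' hs).hasSum.tendsto_sum_nat).congr fun N => ?_
    rw [sum_range_two_mul]
    rfl
  have hterm := aterm'_tendsto hs
  have h2N : Tendsto (fun N : ℕ => 2 * N) atTop atTop :=
    tendsto_atTop_mono (f := id) (fun n => by simp only [id]; omega) tendsto_id
  have hodd : Tendsto (fun N : ℕ => ∑ n ∈ range (2 * N + 1), aterm' s n) atTop (𝓝 (EtaF s)) := by
    have heq : (fun N : ℕ => ∑ n ∈ range (2 * N + 1), aterm' s n)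
        = fun N => (∑ n ∈ range (2 * N), aterm' s n) + aterm' s (2 * N) := by
      funext N; rw [Finset.sum_range_succ]
    rw [heq]
    simpa using heven.add (hterm.comp h2N)
  rw [Metric.tendsto_atTop] at heven hodd ⊢
  intro ε hε
  obtain ⟨N₁, h₁⟩ := heven ε hε
  obtain ⟨N₂, h₂⟩ := hodd ε hε
  refine ⟨2 * (N₁ + N₂) + 2, fun n hn => ?_⟩
  rcases Nat.even_or_odd n with ⟨k, hk⟩ | ⟨k, hk⟩
  · have hk' : n = 2 * k := by omega
    rw [hk']
    exact h₁ k (by omega)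
  · rw [hk]
    exact h₂ k (by omega)

end EtaAux3

section EtaAux4
open Complex Metric

private lemma pterm'_diff (k : ℕ) : Differentiable ℂ (fun s => pterm' s k) := by
  have hdiff : ∀ m : ℕ, Differentiable ℂ (fun s : ℂ => aterm' s m) := by
    intro m
    have hc : ((m : ℂ) + 1) ≠ 0 := by
      intro h
      have : (0:ℝ) < (m:ℝ) + 1 := by positivity
      have := congrArg Complex.re h
      simp at this
      linarith
    have hden : Differentiable ℂ (fun s : ℂ => ((m : ℂ) + 1) ^ s) :=
      differentiable_id.const_cpow (Or.inl hc)
    exact (differentiable_const _).div hden fun s => by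
      simp only [Ne, Complex.cpow_eq_zero_iff, not_and_or, not_ne_iff]
      exact Or.inl hc
  exact (hdiff (2 * k)).add (hdiff (2 * k + 1))

private lemma etaF_diffAt {s₀ : ℂ} (h : 0 < s₀.re) : DifferentiableAt ℂ EtaF s₀ := by
  set r : ℝ := s₀.re / 2 with hr
  have hr0 : 0 < r := by positivity
  have hball : ∀ s ∈ ball s₀ r, s₀.re / 2 < s.re ∧ ‖s‖ ≤ ‖s₀‖ + r := by
    intro s hs
    rw [mem_ball, Complex.dist_eq] at hs
    constructor
    · have h1 : |(s - s₀).re| ≤ ‖s - s₀‖ := Complex.abs_re_le_norm _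
      have h2 : s₀.re - s.re ≤ |(s - s₀).re| := by
        rw [Complex.sub_re]
        rcases abs_cases (s.re - s₀.re) with ⟨heq, _⟩ | ⟨heq, _⟩ <;> rw [heq] <;> linarith [abs_nonneg (s.re - s₀.re)]
      linarith
    · have h3 : ‖s‖ - ‖s₀‖ ≤ ‖s - s₀‖ := norm_sub_norm_le s s₀
      have : ‖s - s₀‖ = ‖s - s₀‖ := rfl
      linarith
  have hdiff : DifferentiableOn ℂ (fun w => ∑' k, pterm' w k) (ball s₀ r) := by
    refine differentiableOn_tsum_of_summable_norm
      (u := fun k : ℕ => (‖s₀‖ + r) * ((2 * k + 1 : ℝ)) ^ (-(s₀.re / 2) - 1))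
      (((bound_summable (by positivity)).mul_left _)) (fun k => (pterm'_diff k).differentiableOn)
      isOpen_ball (fun k w hw => ?_)
    obtain ⟨hw1, hw2⟩ := hball w hw
    have hwre : 0 < w.re := by linarith
    refine (pterm'_bound hwre k).trans ?_
    have hbase : (1:ℝ) ≤ 2 * k + 1 := by linarith [Nat.cast_nonneg (α := ℝ) k]
    refine mul_le_mul hw2 (Real.rpow_le_rpow_of_exponent_le hbase (by linarith))
      (Real.rpow_nonneg (by positivity) _) (by positivity)
  have : EtaF = fun w => ∑' k, pterm' w k := rfl
  rw [this]
  exact (hdiff.differentiableAt (isOpen_ball.mem_nhds (mem_ball_self hr0)))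

end EtaAux4

section EtaAux5
open Complex

private lemma summable_b {s : ℂ} (hs : 1 < s.re) :
    Summable (fun n : ℕ => 1 / ((n:ℂ)+1)^s) := by
  have hnorm : ∀ n : ℕ, ‖1 / ((n:ℂ)+1)^s‖ = ((n : ℝ) + 1) ^ (-s.re) := by
    intro n
    have h1 : ((n : ℂ) + 1) = (((n : ℝ) + 1 : ℝ) : ℂ) := by push_cast; ring
    have h2 : (0 : ℝ) < (n : ℝ) + 1 := by positivity
    rw [norm_div, norm_one, h1,
      Complex.norm_cpow_eq_rpow_re_of_pos h2, Real.rpow_neg h2.le, one_div]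
  apply Summable.of_norm
  have hsum0 : Summable (fun n : ℕ => ((n:ℝ)+1)^(-s.re)) := by
    have h := (Real.summable_nat_rpow (p := -s.re)).2 (by linarith)
    have h2 := (summable_nat_add_iff (f := fun n : ℕ => (n:ℝ)^(-s.re)) 1).2 h
    exact h2.congr fun k => by push_cast; ring_nf
  exact hsum0.congr fun n => (hnorm n).symm

private lemma etaF_eq_of_one_lt {s : ℂ} (hs : 1 < s.re) :
    EtaF s = (1 - 2 ^ ((1:ℂ) - s)) * riemannZeta s := by
  set b : ℕ → ℂ := fun n => 1 / ((n:ℂ)+1)^s with hbdef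
  have hb : Summable b := summable_b hs
  have hbe : Summable (fun k => b (2*k)) := hb.comp_injective (fun a c h => by omega)
  have hbo : Summable (fun k => b (2*k+1)) := hb.comp_injective (fun a c h => by omega)
  have heo : (∑' k, b (2*k)) + (∑' k, b (2*k+1)) = ∑' n, b n := tsum_even_add_odd hbe hbo
  have hzeta : ∑' n, b n = riemannZeta s := (zeta_eq_tsum_one_div_nat_add_one_cpow hs).symm
  have hodd_val : (∑' k, b (2*k+1)) = 2 ^ (-s) * riemannZeta s := by
    have hterm : ∀ k : ℕ, b (2*k+1) = 2^(-s) * b k := by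
      intro k
      rw [hbdef]
      simp only
      have h1 : (((2*k+1:ℕ):ℂ)+1) = (((2:ℝ):ℂ) * (((k:ℝ)+1 : ℝ):ℂ)) := by push_cast; ring
      rw [h1, Complex.mul_cpow_ofReal_nonneg (by norm_num) (by positivity)]
      have h2 : ((((k:ℝ)+1) : ℝ):ℂ) = (k:ℂ)+1 := by push_cast; ring
      have h3 : (((2:ℝ)):ℂ) = 2 := by norm_num
      rw [h2, h3, Complex.cpow_neg, one_div, mul_inv, one_div]
    rw [tsum_congr hterm, tsum_mul_left]
    rw [show ∑' k, b k = riemannZeta s from hzeta]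
  have heven_val : (∑' k, b (2*k)) = riemannZeta s - 2^(-s) * riemannZeta s := by
    linear_combination heo + hzeta - hodd_val
  have hp : ∀ k, pterm' s k = b (2*k) - b (2*k+1) := by
    intro k
    have hsgn1 : ((-1:ℂ))^(2*k) = 1 := by rw [pow_mul]; norm_num
    have hsgn2 : ((-1:ℂ))^(2*k+1) = -1 := by rw [pow_succ, hsgn1]; ring
    rw [pterm', aterm', aterm', hbdef]
    simp only
    rw [hsgn1, hsgn2]
    push_cast
    ring
  rw [EtaF, tsum_congr hp, Summable.tsum_sub hbe hbo, hodd_val, heven_val]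
  have h2s : (2:ℂ)^((1:ℂ)-s) = 2 * 2^(-s) := by
    rw [show (1:ℂ) - s = 1 + (-s) by ring, Complex.cpow_add _ _ (two_ne_zero), Complex.cpow_one]
  rw [h2s]
  ring

end EtaAux5

section EtaAux6
open Complex Set

private def Ustrip : Set ℂ := {s : ℂ | 0 < s.re ∧ s ≠ 1}

private lemma preconn_U : IsPreconnected Ustrip := by
  have hA : Convex ℝ {s : ℂ | 0 < s.re ∧ 0 < s.im} :=
    (convex_halfSpace_re_gt 0).inter (convex_halfSpace_im_gt 0)
  have hB : Convex ℝ {s : ℂ | 0 < s.re ∧ s.im < 0} :=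
    (convex_halfSpace_re_gt 0).inter (convex_halfSpace_im_lt 0)
  have hC : Convex ℝ {s : ℂ | 0 < s.re ∧ s.re < 1} :=
    (convex_halfSpace_re_gt 0).inter (convex_halfSpace_re_lt 1)
  have hD : Convex ℝ {s : ℂ | 1 < s.re} := convex_halfSpace_re_gt 1
  have hCA : IsPreconnected ({s : ℂ | 0 < s.re ∧ s.re < 1} ∪ {s : ℂ | 0 < s.re ∧ 0 < s.im}) :=
    IsPreconnected.union (⟨1/2, 1/2⟩ : ℂ)
      ⟨by norm_num, by norm_num⟩ ⟨by norm_num, by norm_num⟩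
      hC.isPreconnected hA.isPreconnected
  have hCAB : IsPreconnected (({s : ℂ | 0 < s.re ∧ s.re < 1} ∪ {s : ℂ | 0 < s.re ∧ 0 < s.im})
      ∪ {s : ℂ | 0 < s.re ∧ s.im < 0}) :=
    IsPreconnected.union (⟨1/2, -1/2⟩ : ℂ)
      (Or.inl ⟨by norm_num, by norm_num⟩) ⟨by norm_num, by norm_num⟩
      hCA hB.isPreconnected
  have hall : IsPreconnected ((({s : ℂ | 0 < s.re ∧ s.re < 1} ∪ {s : ℂ | 0 < s.re ∧ 0 < s.im})
      ∪ {s : ℂ | 0 < s.re ∧ s.im < 0}) ∪ {s : ℂ | 1 < s.re}) :=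
    IsPreconnected.union (⟨2, 1⟩ : ℂ)
      (Or.inl (Or.inr ⟨by norm_num, by norm_num⟩)) (by norm_num)
      hCAB hD.isPreconnected
  have hset : Ustrip = (({s : ℂ | 0 < s.re ∧ s.re < 1} ∪ {s : ℂ | 0 < s.re ∧ 0 < s.im})
      ∪ {s : ℂ | 0 < s.re ∧ s.im < 0}) ∪ {s : ℂ | 1 < s.re} := by
    ext s
    simp only [Ustrip, Set.mem_union, Set.mem_setOf_eq]
    constructor
    · rintro ⟨h1, h2⟩
      rcases lt_trichotomy s.re 1 with h | h | h
      · exact Or.inl (Or.inl (Or.inl ⟨h1, h⟩))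
      · rcases lt_trichotomy s.im 0 with hi | hi | hi
        · exact Or.inl (Or.inr ⟨h1, hi⟩)
        · exact absurd (Complex.ext h (by simpa using hi)) h2
        · exact Or.inl (Or.inl (Or.inr ⟨h1, hi⟩))
      · exact Or.inr h
    · rintro (((⟨h1, h2⟩ | ⟨h1, h2⟩) | ⟨h1, h2⟩) | h)
      · exact ⟨h1, fun he => by rw [he] at h2; simp at h2⟩
      · exact ⟨h1, fun he => by rw [he] at h2; simp at h2⟩
      · exact ⟨h1, fun he => by rw [he] at h2; simp at h2⟩
      · exact ⟨by linarith, fun he => by rw [he] at h; simp at h⟩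
  rw [hset]
  exact hall

private lemma etaF_eq {s : ℂ} (hs : 0 < s.re) (hs1 : s ≠ 1) :
    EtaF s = (1 - 2 ^ ((1:ℂ) - s)) * riemannZeta s := by
  have hopen0 : IsOpen {s : ℂ | 0 < s.re} := isOpen_lt continuous_const Complex.continuous_re
  have hopenU : IsOpen Ustrip := by
    have : Ustrip = {s : ℂ | 0 < s.re} ∩ {(1:ℂ)}ᶜ := by
      ext w; simp [Ustrip, and_comm]
    rw [this]
    exact hopen0.inter isOpen_compl_singleton
  have hF : AnalyticOnNhd ℂ EtaF Ustrip := by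
    have hd : DifferentiableOn ℂ EtaF {s : ℂ | 0 < s.re} :=
      fun w hw => (etaF_diffAt hw).differentiableWithinAt
    exact (hd.analyticOnNhd hopen0).mono fun w hw => hw.1
  have hG : AnalyticOnNhd ℂ (fun s => (1 - 2 ^ ((1:ℂ) - s)) * riemannZeta s) Ustrip := by
    have hd : DifferentiableOn ℂ (fun s => (1 - 2 ^ ((1:ℂ) - s)) * riemannZeta s) Ustrip := by
      intro w hw
      refine DifferentiableAt.differentiableWithinAt ?_
      have h2 : DifferentiableAt ℂ (fun s : ℂ => (2:ℂ) ^ ((1:ℂ) - s)) w :=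
        ((differentiableAt_const (1:ℂ)).sub differentiableAt_id).const_cpow (Or.inl two_ne_zero)
      exact ((differentiableAt_const (1:ℂ)).sub h2).mul (differentiableAt_riemannZeta hw.2)
    exact hd.analyticOnNhd hopenU
  have h2mem : (2:ℂ) ∈ Ustrip := by
    constructor
    · norm_num
    · norm_num
  have hev : EtaF =ᶠ[𝓝 (2:ℂ)] fun s => (1 - 2 ^ ((1:ℂ) - s)) * riemannZeta s := by
    have hopen1 : IsOpen {s : ℂ | 1 < s.re} := isOpen_lt continuous_const Complex.continuous_re
    have h2m : (2:ℂ) ∈ {s : ℂ | 1 < s.re} := by norm_num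
    filter_upwards [hopen1.mem_nhds h2m] with w hw
    exact etaF_eq_of_one_lt hw
  exact hF.eqOn_of_preconnected_of_eventuallyEq hG preconn_U h2mem hev ⟨hs, hs1⟩

end EtaAux6


theorem stmt_7 (z : ℂ) (h0 : 0 < z.re) (h1 : z.re < 1) (hz : riemannZeta z = 0) :
    ∃ L : ℂ,
      Tendsto (fun N : ℕ => ∑ n ∈ Finset.range N,
          (-1 : ℂ) ^ n / ((n : ℂ) + 1) ^ (starRingEnd ℂ z)) atTop (nhds L) ∧
      Tendsto (fun N : ℕ => ∑ n ∈ Finset.range N,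
          (-1 : ℂ) ^ n / ((n : ℂ) + 1) ^ ((1 : ℂ) - z)) atTop (nhds L) := by
  have hz1 : z ≠ 1 := fun h => by rw [h] at h1; simp at h1
  have hEz : EtaF z = 0 := by rw [etaF_eq h0 hz1, hz, mul_zero]
  refine ⟨0, ?_, ?_⟩
  · -- conjugate case
    have hconj : ∀ N : ℕ, (starRingEnd ℂ) (∑ n ∈ Finset.range N, aterm' z n)
        = ∑ n ∈ Finset.range N, (-1 : ℂ) ^ n / ((n : ℂ) + 1) ^ (starRingEnd ℂ z) := by
      intro N
      rw [map_sum]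
      refine Finset.sum_congr rfl fun n _ => ?_
      rw [aterm', map_div₀, map_pow, map_neg, map_one]
      congr 1
      have hx : ((n:ℂ)+1) = (((n:ℝ)+1:ℝ):ℂ) := by push_cast; ring
      have harg : ((((n:ℝ)+1:ℝ)):ℂ).arg ≠ Real.pi := by
        rw [Complex.arg_ofReal_of_nonneg (by positivity)]
        exact Real.pi_ne_zero.symm
      have hc := Complex.cpow_conj ((((n:ℝ)+1:ℝ)):ℂ) z harg
      rw [Complex.conj_ofReal] at hc
      rw [hx, hc]
    have ht : Tendsto (fun N : ℕ => (starRingEnd ℂ) (∑ n ∈ Finset.range N, aterm' z n))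
        atTop (nhds ((starRingEnd ℂ) (EtaF z))) :=
      ((Complex.continuous_conj.tendsto _).comp (tendsto_etaF h0))
    rw [hEz, map_zero] at ht
    exact ht.congr hconj
  · -- 1 - z case
    have hre : (0:ℝ) < ((1:ℂ) - z).re := by simp [Complex.sub_re]; linarith
    have hne1 : (1:ℂ) - z ≠ 1 := by
      intro h
      have : z = 0 := by linear_combination -h
      rw [this] at h0; simp at h0
    have hneq : ∀ n : ℕ, z ≠ -n := by
      intro n h
      rw [h] at h0
      simp only [Complex.neg_re, Complex.natCast_re, neg_pos] at h0
      exact absurd h0 (not_lt.2 (Nat.cast_nonneg n))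
    have hz2 : riemannZeta ((1:ℂ) - z) = 0 := by
      rw [riemannZeta_one_sub hneq hz1, hz, mul_zero]
    have hE2 : EtaF ((1:ℂ) - z) = 0 := by rw [etaF_eq hre hne1, hz2, mul_zero]
    have := tendsto_etaF hre
    rw [hE2] at this
    exact this
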